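/- arXiv:1410.1174 — 4 statements merged into one kernel-verified Lean document; each statement's English description precedes it below -/
import Mathlib

section
/- Let A ∈ ℝ^{n×p}, η ≥ 0, and 1 ≤ m ≤ np. Define B̂ by b̂_{ij} = a_{ij}/(1+η) if |a_{ij}| is among the m largest absolute values of entries of A, and b̂_{ij} = 0 otherwise. Then B̂ is a global minimizer of B ↦ (1/2)‖A-B‖_F² + (η/2)‖B‖_F² subject to B having at most m nonzero entries. -/
open scoped Classical

lemma aux_sum_le {α : Type*} [DecidableEq α] (f : α → ℝ) (hf : ∀ a, 0 ≤ f a)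
    (S T : Finset α) (hcard : T.card ≤ S.card)
    (hsel : ∀ q ∈ S, ∀ r ∉ S, f r ≤ f q) :
    ∑ r ∈ T, f r ≤ ∑ q ∈ S, f q := by
  have hTsplit : ∑ r ∈ T ∩ S, f r + ∑ r ∈ T \ S, f r = ∑ r ∈ T, f r :=
    Finset.sum_inter_add_sum_sdiff T S f
  have hSsplit : ∑ r ∈ S ∩ T, f r + ∑ r ∈ S \ T, f r = ∑ q ∈ S, f q :=
    Finset.sum_inter_add_sum_sdiff S T f
  have hieq : ∑ r ∈ T ∩ S, f r = ∑ r ∈ S ∩ T, f r := by rw [Finset.inter_comm]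
  have hcards : (T \ S).card ≤ (S \ T).card := by
    have h1 := Finset.card_sdiff_add_card_inter T S
    have h2 := Finset.card_sdiff_add_card_inter S T
    have h3 : (T ∩ S).card = (S ∩ T).card := by rw [Finset.inter_comm]
    omega
  have hdiff : ∑ r ∈ T \ S, f r ≤ ∑ q ∈ S \ T, f q := by
    by_cases h : (T \ S).Nonempty
    · have hne : (S \ T).Nonempty := by
        rw [← Finset.card_pos] at h ⊢; omega
      obtain ⟨q0, hq0, hq0min⟩ := Finset.exists_min_image (S \ T) f hne
      have hq0S : q0 ∈ S := (Finset.mem_sdiff.mp hq0).1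
      calc ∑ r ∈ T \ S, f r ≤ (T \ S).card • f q0 := by
            apply Finset.sum_le_card_nsmul
            intro r hr
            exact hsel q0 hq0S r (Finset.mem_sdiff.mp hr).2
        _ ≤ (S \ T).card • f q0 := by
            rw [nsmul_eq_mul, nsmul_eq_mul]
            exact mul_le_mul_of_nonneg_right (by exact_mod_cast hcards) (hf q0)
        _ ≤ ∑ q ∈ S \ T, f q := Finset.card_nsmul_le_sum _ _ _ hq0min
    · rw [Finset.not_nonempty_iff_eq_empty] at h
      rw [h, Finset.sum_empty]
      exact Finset.sum_nonneg fun q _ => hf q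
  linarith

lemma aux_ptwise (η a b : ℝ) (hη : 0 ≤ η) :
    η / (2 * (1 + η)) * a ^ 2 ≤ (1/2) * (a - b) ^ 2 + (η/2) * b ^ 2 := by
  rw [div_mul_eq_mul_div, div_le_iff₀ (by linarith)]
  nlinarith [sq_nonneg (a - (1 + η) * b)]

theorem stmt_4 {n p : ℕ} (A : Matrix (Fin n) (Fin p) ℝ) (η : ℝ) (hη : 0 ≤ η)
    (m : ℕ) (hm1 : 1 ≤ m) (hm2 : m ≤ n * p)
    (S : Finset (Fin n × Fin p)) (hScard : S.card = m)
    (hSel : ∀ q ∈ S, ∀ r ∉ S, |A r.1 r.2| ≤ |A q.1 q.2|)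
    (Bhat : Matrix (Fin n) (Fin p) ℝ)
    (hBhat : ∀ i j, Bhat i j = if (i, j) ∈ S then A i j / (1 + η) else 0) :
    ∀ B : Matrix (Fin n) (Fin p) ℝ,
      (Finset.univ.filter fun q : Fin n × Fin p => B q.1 q.2 ≠ 0).card ≤ m →
        (1 / 2) * (∑ i, ∑ j, (A i j - Bhat i j) ^ 2) +
            (η / 2) * (∑ i, ∑ j, (Bhat i j) ^ 2) ≤
          (1 / 2) * (∑ i, ∑ j, (A i j - B i j) ^ 2) +
            (η / 2) * (∑ i, ∑ j, (B i j) ^ 2) := by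
  intro B hB
  set c : ℝ := η / (2 * (1 + η)) with hc
  have h1η : (0:ℝ) < 1 + η := by linarith
  have hcle : c ≤ 1 / 2 := by
    rw [hc, div_le_div_iff₀ (by linarith) (by norm_num)]; nlinarith
  set T := Finset.univ.filter fun q : Fin n × Fin p => B q.1 q.2 ≠ 0 with hT
  -- rewrite all double sums as single sums over the product type
  have conv : ∀ f : Fin n → Fin p → ℝ, ∑ i, ∑ j, f i j = ∑ q : Fin n × Fin p, f q.1 q.2 := by
    intro f; rw [Fintype.sum_prod_type]
  rw [conv, conv, conv, conv, Finset.mul_sum, Finset.mul_sum, Finset.mul_sum,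
    Finset.mul_sum, ← Finset.sum_add_distrib, ← Finset.sum_add_distrib]
  -- compute LHS exactly
  have hL : ∑ q : Fin n × Fin p,
      ((1/2) * (A q.1 q.2 - Bhat q.1 q.2) ^ 2 + (η/2) * (Bhat q.1 q.2) ^ 2) =
      ∑ q : Fin n × Fin p, (if q ∈ S then c * (A q.1 q.2) ^ 2 else (A q.1 q.2) ^ 2 / 2) := by
    apply Finset.sum_congr rfl
    intro q _
    rw [hBhat q.1 q.2]
    by_cases hq : q ∈ S
    · simp only [hq, if_true, Prod.mk.eta]
      rw [hc]; field_simp; ring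
    · simp only [hq, if_false, Prod.mk.eta]
      ring
  rw [hL]
  -- lower bound the RHS pointwise
  have hR : ∑ q : Fin n × Fin p, (if q ∈ T then c * (A q.1 q.2) ^ 2 else (A q.1 q.2) ^ 2 / 2) ≤
      ∑ q : Fin n × Fin p,
      ((1/2) * (A q.1 q.2 - B q.1 q.2) ^ 2 + (η/2) * (B q.1 q.2) ^ 2) := by
    apply Finset.sum_le_sum
    intro q _
    by_cases hq : q ∈ T
    · simp only [hq, if_true]
      exact aux_ptwise η _ _ hη
    · have hb0 : B q.1 q.2 = 0 := by
        by_contra hne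
        exact hq (Finset.mem_filter.mpr ⟨Finset.mem_univ q, hne⟩)
      simp only [hq, if_false, hb0]
      ring_nf
      rfl
  refine le_trans ?_ hR
  -- compare sums indexed by S and T
  have hsplit : ∀ U : Finset (Fin n × Fin p),
      ∑ q : Fin n × Fin p, (if q ∈ U then c * (A q.1 q.2) ^ 2 else (A q.1 q.2) ^ 2 / 2) =
      ∑ q : Fin n × Fin p, (A q.1 q.2) ^ 2 / 2 + (c - 1/2) * ∑ q ∈ U, (A q.1 q.2) ^ 2 := by
    intro U
    have hpt : ∀ q : Fin n × Fin p,
        (if q ∈ U then c * (A q.1 q.2) ^ 2 else (A q.1 q.2) ^ 2 / 2) =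
        (A q.1 q.2) ^ 2 / 2 + (if q ∈ U then (c - 1/2) * (A q.1 q.2) ^ 2 else 0) := by
      intro q; split_ifs <;> ring
    rw [Finset.sum_congr rfl fun q _ => hpt q, Finset.sum_add_distrib,
      Finset.sum_ite_mem, Finset.univ_inter, Finset.mul_sum]
  rw [hsplit S, hsplit T]
  have hkey : ∑ q ∈ T, (A q.1 q.2) ^ 2 ≤ ∑ q ∈ S, (A q.1 q.2) ^ 2 := by
    apply aux_sum_le _ (fun q => sq_nonneg _) _ _ (by omega)
    intro q hq r hr
    have := hSel q hq r hr
    calc (A r.1 r.2) ^ 2 = |A r.1 r.2| ^ 2 := (sq_abs _).symm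
      _ ≤ |A q.1 q.2| ^ 2 := by exact pow_le_pow_left₀ (abs_nonneg _) this 2
      _ = (A q.1 q.2) ^ 2 := sq_abs _
  nlinarith [hkey]
end

section
/- For any x, x* ∈ ℝⁿ with f(x) = Lπ(Ax+u) - Dx + c and f(x*) = 0, there exists a diagonal matrix G with 0 ⪯ G ⪯ (1/4)I such that f(x) = -(D - L G A)(x - x*). -/
/-- The sigmoid function. -/
noncomputable def sig (θ : ℝ) : ℝ := 1 / (1 + Real.exp (-θ))

lemma one_add_exp_pos (θ : ℝ) : 0 < 1 + Real.exp (-θ) := by positivity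

lemma sig_hasDerivAt (θ : ℝ) : HasDerivAt sig (sig θ * (1 - sig θ)) θ := by
  have h1 : HasDerivAt (fun t : ℝ => 1 + Real.exp (-t)) (-Real.exp (-θ)) θ := by
    have := (Real.hasDerivAt_exp (-θ)).comp θ ((hasDerivAt_id θ).neg)
    simpa using (this.const_add 1)
  have h2 := h1.inv (ne_of_gt (one_add_exp_pos θ))
  have hfun : sig = fun y => (1 + Real.exp (-y))⁻¹ := by
    funext y; unfold sig; rw [one_div]
  have heq : sig θ * (1 - sig θ) = - -Real.exp (-θ) / (1 + Real.exp (-θ)) ^ 2 := by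
    unfold sig
    field_simp
    ring
  rw [heq, hfun]
  exact h2

lemma sig_mem (θ : ℝ) : 0 < sig θ ∧ sig θ < 1 := by
  unfold sig
  constructor
  · positivity
  · rw [div_lt_one (one_add_exp_pos θ)]
    linarith [Real.exp_pos (-θ)]

lemma sig_slope (s t : ℝ) : ∃ g : ℝ, 0 ≤ g ∧ g ≤ 1 / 4 ∧ sig s - sig t = g * (s - t) := by
  have key : ∀ a b : ℝ, a < b → ∃ g, 0 ≤ g ∧ g ≤ 1 / 4 ∧ sig b - sig a = g * (b - a) := by
    intro a b hab
    have hc : ∀ θ ∈ Set.Ioo a b, HasDerivAt sig (sig θ * (1 - sig θ)) θ :=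
      fun θ _ => sig_hasDerivAt θ
    obtain ⟨θ, hθ, heq⟩ := exists_hasDerivAt_eq_slope sig (fun θ => sig θ * (1 - sig θ)) hab
      (fun θ _ => (sig_hasDerivAt θ).continuousAt.continuousWithinAt) hc
    refine ⟨sig θ * (1 - sig θ), ?_, ?_, ?_⟩
    · have := sig_mem θ; nlinarith [this.1, this.2]
    · have := sig_mem θ; nlinarith [sq_nonneg (sig θ - 1/2)]
    · rw [heq, div_mul_cancel₀ _ (by linarith : b - a ≠ 0)]
  rcases lt_trichotomy s t with h | h | h
  · obtain ⟨g, h0, h4, he⟩ := key s t h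
    exact ⟨g, h0, h4, by linarith [he]⟩
  · exact ⟨0, le_refl 0, by norm_num, by rw [h]; ring⟩
  · obtain ⟨g, h0, h4, he⟩ := key t s h
    exact ⟨g, h0, h4, by linarith [he]⟩

theorem stmt_7 {n : ℕ} (A : Matrix (Fin n) (Fin n) ℝ) (l d u c : Fin n → ℝ)
    (x xs : Fin n → ℝ)
    (hxs : ∀ i, l i * sig ((A.mulVec xs) i + u i) - d i * xs i + c i = 0) :
    ∃ g : Fin n → ℝ, (∀ i, 0 ≤ g i ∧ g i ≤ 1 / 4) ∧
      ∀ i, l i * sig ((A.mulVec x) i + u i) - d i * x i + c i =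
        -(d i * (x i - xs i) - l i * g i * (A.mulVec (fun j => x j - xs j)) i) := by
  choose g hg0 hg4 hgeq using fun i =>
    sig_slope ((A.mulVec x) i + u i) ((A.mulVec xs) i + u i)
  refine ⟨g, fun i => ⟨hg0 i, hg4 i⟩, fun i => ?_⟩
  have hsub : (A.mulVec (fun j => x j - xs j)) i = (A.mulVec x) i - (A.mulVec xs) i := by
    have : (fun j => x j - xs j) = x - xs := rfl
    rw [this, Matrix.mulVec_sub]
    rfl
  rw [hsub]
  have h1 := hgeq i
  have h2 := hxs i
  linear_combination l i * h1 + h2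
end

section
/- Let S be a real symmetric n×n matrix with spectral decomposition S = U diag(s₁,…,sₙ) Uᵀ. Then the matrix S₋ = U diag(min(sᵢ,0)) Uᵀ is the (unique) minimizer of ‖C - S‖_F over symmetric negative semidefinite matrices C. -/
open Matrix

lemma frob_trace {n : ℕ} (M : Matrix (Fin n) (Fin n) ℝ) :
    ∑ i, ∑ j, (M i j) ^ 2 = (Mᵀ * M).trace := by
  simp only [Matrix.trace, Matrix.diag, Matrix.mul_apply, Matrix.transpose_apply, sq]
  rw [Finset.sum_comm]

lemma frob_conj {n : ℕ} (U : Matrix (Fin n) (Fin n) ℝ) (hU : U * Uᵀ = 1)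
    (M : Matrix (Fin n) (Fin n) ℝ) :
    ∑ i, ∑ j, ((U * M * Uᵀ) i j) ^ 2 = ∑ i, ∑ j, (M i j) ^ 2 := by
  have hUtU : Uᵀ * U = 1 := mul_eq_one_comm.mp hU
  rw [frob_trace, frob_trace]
  have h1 : (U * M * Uᵀ)ᵀ * (U * M * Uᵀ) = U * (Mᵀ * M) * Uᵀ := by
    have h2 : (U * M * Uᵀ)ᵀ * (U * M * Uᵀ) = U * Mᵀ * (Uᵀ * U) * (M * Uᵀ) := by
      simp only [Matrix.transpose_mul, Matrix.transpose_transpose]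
      noncomm_ring
    rw [h2, hUtU, Matrix.mul_one]
    noncomm_ring
  rw [h1, Matrix.trace_mul_comm, ← Matrix.mul_assoc, hUtU, Matrix.one_mul]

lemma scalar_le {a b : ℝ} (hb : b ≤ 0) : (min a 0 - a) ^ 2 ≤ (b - a) ^ 2 := by
  rcases le_or_gt a 0 with h | h
  · rw [min_eq_left h]; simpa using sq_nonneg (b - a)
  · rw [min_eq_right h.le]; nlinarith

lemma scalar_eq {a b : ℝ} (hb : b ≤ 0) (h : (b - a) ^ 2 = (min a 0 - a) ^ 2) :
    b = min a 0 := by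
  rcases le_or_gt a 0 with h' | h'
  · rw [min_eq_left h'] at h ⊢; nlinarith
  · rw [min_eq_right h'.le] at h ⊢; nlinarith

theorem stmt_14 {n : ℕ} (S U : Matrix (Fin n) (Fin n) ℝ) (s : Fin n → ℝ)
    (hS : S.IsSymm) (hU : U * Uᵀ = 1) (hUS : S = U * Matrix.diagonal s * Uᵀ)
    (Sm : Matrix (Fin n) (Fin n) ℝ)
    (hSm : Sm = U * Matrix.diagonal (fun i => min (s i) 0) * Uᵀ) :
    Sm.IsSymm ∧ (-Sm).PosSemidef ∧
      ∀ C : Matrix (Fin n) (Fin n) ℝ, C.IsSymm → (-C).PosSemidef →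
        (∑ i, ∑ j, (Sm i j - S i j) ^ 2 ≤ ∑ i, ∑ j, (C i j - S i j) ^ 2) ∧
          (∑ i, ∑ j, (C i j - S i j) ^ 2 = ∑ i, ∑ j, (Sm i j - S i j) ^ 2 →
            C = Sm) := by
  have hUtU : Uᵀ * U = 1 := mul_eq_one_comm.mp hU
  set D := Matrix.diagonal s with hD
  set Dm := Matrix.diagonal (fun i => min (s i) 0) with hDm
  have hSmS : Sm - S = U * (Dm - D) * Uᵀ := by
    rw [hSm, hUS]; noncomm_ring
  refine ⟨?_, ?_, ?_⟩
  · rw [Matrix.IsSymm, hSm, hDm]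
    simp only [Matrix.transpose_mul, Matrix.transpose_transpose,
      Matrix.diagonal_transpose, Matrix.mul_assoc]
  · have hneg : -Sm = U * Matrix.diagonal (fun i => -min (s i) 0) * Uᵀ := by
      rw [hSm, hDm, ← Matrix.diagonal_neg]
      noncomm_ring
    rw [hneg]
    have hd : (Matrix.diagonal (fun i => -min (s i) 0)).PosSemidef := by
      rw [Matrix.posSemidef_diagonal_iff]
      intro i; simp [min_le_iff]
    have := hd.mul_mul_conjTranspose_same U
    simpa using this
  · intro C hCs hCp
    set B := Uᵀ * C * U with hB
    have hCB : C = U * B * Uᵀ := by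
      rw [hB]
      calc C = (U * Uᵀ) * C * (U * Uᵀ) := by rw [hU]; simp
        _ = U * (Uᵀ * C * U) * Uᵀ := by noncomm_ring
    have hBd : ∀ i, B i i ≤ 0 := by
      intro i
      have h2 := hCp.dotProduct_mulVec_nonneg (Pi.single i 1)
      have hval : (Pi.single i 1 : Fin n → ℝ) ⬝ᵥ ((-C) *ᵥ Pi.single i 1) = -(C i i) := by
        simp [Matrix.mulVec, dotProduct, Pi.single_apply, Finset.sum_ite_eq]
      rw [show star (Pi.single i 1 : Fin n → ℝ) = Pi.single i 1 from rfl, hval] at h2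
      -- B i i = (Uᵀ C U) i i; need B i i ≤ 0. Use -B PSD instead.
      have hnB : (-B).PosSemidef := by
        have : -B = Uᵀ * (-C) * (Uᵀ)ᵀ := by
          rw [hB]; simp [Matrix.mul_neg, Matrix.neg_mul, Matrix.transpose_transpose]
        rw [this]
        have := hCp.mul_mul_conjTranspose_same Uᵀ
        simpa using this
      have h3 := hnB.dotProduct_mulVec_nonneg (Pi.single i 1)
      have hval3 : (Pi.single i 1 : Fin n → ℝ) ⬝ᵥ ((-B) *ᵥ Pi.single i 1) = -(B i i) := by
        simp [Matrix.mulVec, dotProduct, Pi.single_apply, Finset.sum_ite_eq]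
      rw [show star (Pi.single i 1 : Fin n → ℝ) = Pi.single i 1 from rfl, hval3] at h3
      linarith
    have hCS : C - S = U * (B - D) * Uᵀ := by
      rw [hUS]; nth_rewrite 1 [hCB]; noncomm_ring
    have hfrobC : ∑ i, ∑ j, (C i j - S i j) ^ 2 = ∑ i, ∑ j, ((B - D) i j) ^ 2 := by
      have := frob_conj U hU (B - D)
      rw [← hCS] at this
      simpa [Matrix.sub_apply] using this
    have hfrobSm : ∑ i, ∑ j, (Sm i j - S i j) ^ 2 = ∑ i, ∑ j, ((Dm - D) i j) ^ 2 := by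
      have := frob_conj U hU (Dm - D)
      rw [← hSmS] at this
      simpa [Matrix.sub_apply] using this
    have key : ∀ i j, ((Dm - D) i j) ^ 2 ≤ ((B - D) i j) ^ 2 := by
      intro i j
      by_cases h : i = j
      · subst h
        simp only [Matrix.sub_apply, hDm, hD, Matrix.diagonal_apply_eq]
        exact scalar_le (hBd i)
      · simp only [Matrix.sub_apply, hDm, hD, Matrix.diagonal_apply_ne _ h, sub_zero]
        simpa using sq_nonneg ((B i j) - 0)
    constructor
    · rw [hfrobC, hfrobSm]
      exact Finset.sum_le_sum fun i _ => Finset.sum_le_sum fun j _ => key i j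
    · intro heq
      rw [hfrobC, hfrobSm] at heq
      have hterm : ∀ i ∈ Finset.univ, ∀ j ∈ (Finset.univ : Finset (Fin n)),
          ((B - D) i j) ^ 2 = ((Dm - D) i j) ^ 2 := by
        have h1 := (Finset.sum_eq_sum_iff_of_le
          (fun i _ => Finset.sum_le_sum fun j (_ : j ∈ Finset.univ) => key i j)).mp heq.symm
        intro i hi j hj
        exact ((Finset.sum_eq_sum_iff_of_le (fun j _ => key i j)).mp (h1 i hi) j hj).symm
      have hBDm : B = Dm := by
        ext i j
        have h := hterm i (Finset.mem_univ i) j (Finset.mem_univ j)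
        by_cases hij : i = j
        · subst hij
          simp only [Matrix.sub_apply, hDm, hD, Matrix.diagonal_apply_eq] at h ⊢
          exact scalar_eq (hBd i) h
        · simp only [Matrix.sub_apply, hDm, hD, Matrix.diagonal_apply_ne _ hij,
            sub_zero] at h ⊢
          nlinarith [h]
      rw [hCB, hBDm, ← hSm]
end

section
/- Let L = diag(l₁,…,lₙ) and let Ψ = Φ_B + ((Φ_C + Φ_Cᵀ)/2) L for given n×n matrices Φ_B, Φ_C. Define B* by b*_{ij} = ψ_{ij}(2+lᵢ²)/(2+lᵢ²+l_j²) - ψ_{ji} lᵢ l_j/(2+lᵢ²+l_j²), and C* = (L B*ᵀ + B* L)/2. Then (B*, C*) is a global minimizer of (1/2)‖B - Φ_B‖_F² + (1/2)‖C - Φ_C‖_F² subject to the linear constraint C = (L Bᵀ + B L)/2. -/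
open Matrix

theorem stmt_16 {n : ℕ} (l : Fin n → ℝ) (ΦB ΦC : Matrix (Fin n) (Fin n) ℝ)
    (L : Matrix (Fin n) (Fin n) ℝ) (hL : L = Matrix.diagonal l)
    (Ψ : Matrix (Fin n) (Fin n) ℝ) (hΨ : Ψ = ΦB + ((1 / 2 : ℝ) • (ΦC + ΦCᵀ)) * L)
    (Bstar Cstar : Matrix (Fin n) (Fin n) ℝ)
    (hBstar : ∀ i j, Bstar i j =
      Ψ i j * (2 + (l i) ^ 2) / (2 + (l i) ^ 2 + (l j) ^ 2) -
        Ψ j i * (l i * l j) / (2 + (l i) ^ 2 + (l j) ^ 2))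
    (hCstar : Cstar = (1 / 2 : ℝ) • (L * Bstarᵀ + Bstar * L)) :
    ∀ B C : Matrix (Fin n) (Fin n) ℝ, C = (1 / 2 : ℝ) • (L * Bᵀ + B * L) →
      (1 / 2) * (∑ i, ∑ j, (Bstar i j - ΦB i j) ^ 2) +
          (1 / 2) * (∑ i, ∑ j, (Cstar i j - ΦC i j) ^ 2) ≤
        (1 / 2) * (∑ i, ∑ j, (B i j - ΦB i j) ^ 2) +
          (1 / 2) * (∑ i, ∑ j, (C i j - ΦC i j) ^ 2) := by
  intro B C hC
  -- entrywise formula for Ψ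
  have hΨe : ∀ i j, Ψ i j = ΦB i j + (1 / 2) * (ΦC i j + ΦC j i) * l j := by
    intro i j
    rw [hΨ, hL]
    simp only [Matrix.add_apply, Matrix.mul_diagonal, Matrix.smul_apply, Matrix.transpose_apply,
      smul_eq_mul]
  -- entrywise formula for Cstar
  have hCse : ∀ i j, Cstar i j = (1 / 2) * (l i * Bstar j i + Bstar i j * l j) := by
    intro i j
    rw [hCstar, hL]
    simp only [Matrix.smul_apply, Matrix.add_apply, Matrix.diagonal_mul, Matrix.mul_diagonal,
      Matrix.transpose_apply, smul_eq_mul]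
  -- linear system satisfied by Bstar
  have hB : ∀ i j, (2 + (l j) ^ 2) * Bstar i j + l i * l j * Bstar j i = 2 * Ψ i j := by
    intro i j
    have hd1 : (2 + (l i) ^ 2 + (l j) ^ 2) ≠ 0 := by positivity
    have hd2 : (2 + (l j) ^ 2 + (l i) ^ 2) ≠ 0 := by positivity
    rw [hBstar i j, hBstar j i]
    field_simp
    ring
  -- stationarity (gradient vanishes at Bstar)
  have hgrad : ∀ i j, (Bstar i j - ΦB i j) +
      (1 / 2) * l j * ((Cstar i j - ΦC i j) + (Cstar j i - ΦC j i)) = 0 := by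
    intro i j
    have h1 := hB i j
    rw [hΨe i j] at h1
    rw [hCse i j, hCse j i]
    linear_combination (1 / 2 : ℝ) * h1
  -- entrywise formula for C in terms of Cstar and the difference B - Bstar
  have hCij : ∀ i j, C i j = Cstar i j +
      (1 / 2) * (l i * (B j i - Bstar j i) + l j * (B i j - Bstar i j)) := by
    intro i j
    have h1 : C i j = (1 / 2) * (l i * B j i + B i j * l j) := by
      rw [hC, hL]
      simp only [Matrix.smul_apply, Matrix.add_apply, Matrix.diagonal_mul, Matrix.mul_diagonal,
        Matrix.transpose_apply, smul_eq_mul]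
    rw [h1, hCse i j]; ring
  -- linear term vanishes
  have hsw : ∑ i, ∑ j, l i * (B j i - Bstar j i) * (Cstar i j - ΦC i j)
      = ∑ i, ∑ j, l j * (B i j - Bstar i j) * (Cstar j i - ΦC j i) :=
    Finset.sum_comm
  have lin0 : ∑ i, ∑ j, ((B i j - Bstar i j) * (Bstar i j - ΦB i j) +
      (1 / 2) * (l i * (B j i - Bstar j i) + l j * (B i j - Bstar i j)) *
        (Cstar i j - ΦC i j)) = 0 := by
    have h1 : ∑ i, ∑ j, ((B i j - Bstar i j) * (Bstar i j - ΦB i j) +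
        (1 / 2) * (l i * (B j i - Bstar j i) + l j * (B i j - Bstar i j)) *
          (Cstar i j - ΦC i j))
        = (∑ i, ∑ j, ((B i j - Bstar i j) * ((Bstar i j - ΦB i j) +
            (1 / 2) * l j * ((Cstar i j - ΦC i j) + (Cstar j i - ΦC j i)))))
          + (1 / 2) * ((∑ i, ∑ j, l i * (B j i - Bstar j i) * (Cstar i j - ΦC i j))
            - (∑ i, ∑ j, l j * (B i j - Bstar i j) * (Cstar j i - ΦC j i))) := by
      simp only [Finset.mul_sum, ← Finset.sum_sub_distrib, ← Finset.sum_add_distrib]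
      refine Finset.sum_congr rfl fun i _ => Finset.sum_congr rfl fun j _ => ?_
      ring
    rw [h1, hsw, sub_self, mul_zero, add_zero]
    refine Finset.sum_eq_zero fun i _ => Finset.sum_eq_zero fun j _ => ?_
    rw [hgrad i j, mul_zero]
  -- nonnegativity of the quadratic term
  have nonneg : 0 ≤ ∑ i, ∑ j, ((1 / 2) * (B i j - Bstar i j) ^ 2 +
      (1 / 2) * (C i j - Cstar i j) ^ 2) :=
    Finset.sum_nonneg fun i _ => Finset.sum_nonneg fun j _ => by positivity
  -- expansion of the objective
  have total : (1 / 2) * (∑ i, ∑ j, (B i j - ΦB i j) ^ 2) +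
        (1 / 2) * (∑ i, ∑ j, (C i j - ΦC i j) ^ 2)
      = ((1 / 2) * (∑ i, ∑ j, (Bstar i j - ΦB i j) ^ 2) +
          (1 / 2) * (∑ i, ∑ j, (Cstar i j - ΦC i j) ^ 2))
        + (∑ i, ∑ j, ((1 / 2) * (B i j - Bstar i j) ^ 2 +
            (1 / 2) * (C i j - Cstar i j) ^ 2))
        + (∑ i, ∑ j, ((B i j - Bstar i j) * (Bstar i j - ΦB i j) +
            (1 / 2) * (l i * (B j i - Bstar j i) + l j * (B i j - Bstar i j)) *
              (Cstar i j - ΦC i j))) := by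
    simp only [Finset.mul_sum, ← Finset.sum_add_distrib]
    refine Finset.sum_congr rfl fun i _ => Finset.sum_congr rfl fun j _ => ?_
    rw [hCij i j]
    ring
  linarith [nonneg, total, lin0]
end
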